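/- Let θ : (y_∞, y₀] → [0,∞) be the free boundary with inverse y(·), and define the time-to-liquidation τ(y) := -(1/δ) log( (f(y)/f(y₀)) · (h(y)λ(y) + h'(y) + δ)/h'(y) ). Then under the standing assumptions, the function y ↦ f(y)·(h(y)λ(y) + h'(y) + δ)/h'(y) is strictly increasing on (y_∞, y₀], hence τ is strictly decreasing there with τ(y₀) = 0 and τ(y) → +∞ as y ↘ y_∞. -/

import Mathlib

open Real Filter intervalIntegral

/-- The map `y ↦ f(y)(hλ+h'+δ)(y)/h'(y)` is strictly increasing on `(y_∞, y₀]`, so the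
time-to-liquidation `τ(y) = -(1/δ) log((f(y)/f(y₀))·(hλ+h'+δ)(y)/h'(y))` is strictly
decreasing there, with `τ(y₀) = 0` and `τ(y) → +∞` as `y ↘ y_∞`. -/
theorem stmt7 (h lam : ℝ → ℝ) (δ y₀ yInf : ℝ)
    (hC2 : ContDiff ℝ 2 h) (hh0 : h 0 = 0)
    (hh' : ∀ y, 0 < deriv h y)
    (hh'' : ∀ y, 0 ≤ deriv (deriv h) y)
    (hlamC1 : ContDiff ℝ 1 lam) (hlampos : ∀ y, 0 < lam y)
    (hhlam' : ∀ y, 0 < deriv (fun z => h z * lam z) y)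
    (hδ : 0 < δ)
    (hy₀lt : y₀ < 0) (hyInflt : yInf < y₀)
    (hy₀ : h y₀ * lam y₀ + δ = 0)
    (hyInf : h yInf * lam yInf + deriv h yInf + δ = 0)
    (f τ : ℝ → ℝ)
    (hf : ∀ y, f y = Real.exp (∫ x in (0:ℝ)..y, lam x))
    (hτ : ∀ y, τ y = -(1 / δ) *
      Real.log ((f y / f y₀) * (h y * lam y + deriv h y + δ) / deriv h y)) :
    StrictMonoOn (fun y => f y * (h y * lam y + deriv h y + δ) / deriv h y)
      (Set.Ioc yInf y₀) ∧
    StrictAntiOn τ (Set.Ioc yInf y₀) ∧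
    τ y₀ = 0 ∧
    Tendsto τ (nhdsWithin yInf (Set.Ioi yInf)) atTop := by
  -- basic regularity
  have hlamc : Continuous lam := hlamC1.continuous
  have hlamd : Differentiable ℝ lam := hlamC1.differentiable one_ne_zero
  have hhd : Differentiable ℝ h := hC2.differentiable (by norm_num)
  have hC1' : ContDiff ℝ 1 (deriv h) := by
    have h2 : ContDiff ℝ ((1:ℕ∞)+1) h := by norm_num; exact hC2
    exact (contDiff_succ_iff_deriv.mp h2).2.2
  have hh'd : Differentiable ℝ (deriv h) := hC1'.differentiable one_ne_zero
  -- derivative of f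
  have hfd : ∀ y, HasDerivAt f (lam y * f y) y := by
    intro y
    have hF : HasDerivAt (fun u => ∫ x in (0:ℝ)..u, lam x) (lam y) y :=
      intervalIntegral.integral_hasDerivAt_right (hlamc.intervalIntegrable _ _)
        (hlamc.stronglyMeasurableAtFilter _ _) hlamc.continuousAt
    have := hF.exp
    have hfeq : f = fun y => Real.exp (∫ x in (0:ℝ)..y, lam x) := funext hf
    rw [hfeq]
    simpa [mul_comm, hf y] using this
  have hfpos : ∀ y, 0 < f y := fun y => by rw [hf y]; exact Real.exp_pos _
  -- derivative of A := hλ + h' + δ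
  set A : ℝ → ℝ := fun y => h y * lam y + deriv h y + δ with hA
  have hAd : ∀ y, HasDerivAt A (deriv (fun z => h z * lam z) y + deriv (deriv h) y) y := by
    intro y
    have h1 : HasDerivAt (fun z => h z * lam z) (deriv (fun z => h z * lam z) y) y :=
      (((hhd y).mul (hlamd y)).hasDerivAt)
    have h2 : HasDerivAt (deriv h) (deriv (deriv h) y) y := (hh'd y).hasDerivAt
    exact (h1.add h2).add_const δ
  have hAmono : StrictMono A := by
    apply strictMono_of_deriv_pos
    intro y
    rw [(hAd y).deriv]
    have := hhlam' y
    have := hh'' y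
    linarith
  have hAinf : A yInf = 0 := by simp only [hA]; linarith
  have hApos : ∀ y, yInf < y → 0 < A y := fun y hy => hAinf ▸ hAmono hy
  -- hλ + δ ≤ 0 on (-∞, y₀]
  have hPmono : StrictMono (fun y => h y * lam y + δ) := by
    apply strictMono_of_deriv_pos
    intro y
    have h1 : HasDerivAt (fun z => h z * lam z + δ)
        (deriv (fun z => h z * lam z) y) y :=
      (((hhd y).mul (hlamd y)).hasDerivAt).add_const δ
    rw [h1.deriv]
    exact hhlam' y
  have hPle : ∀ y, y ≤ y₀ → h y * lam y + δ ≤ 0 := by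
    intro y hy
    have := hPmono.monotone hy
    linarith
  -- the function g and its derivative
  set g : ℝ → ℝ := fun y => f y * A y / deriv h y with hg
  have hgd : ∀ y, HasDerivAt g
      (((lam y * f y * A y + f y * (deriv (fun z => h z * lam z) y + deriv (deriv h) y)) *
        deriv h y - f y * A y * deriv (deriv h) y) / (deriv h y) ^ 2) y := by
    intro y
    exact ((hfd y).mul (hAd y)).div ((hh'd y).hasDerivAt) (ne_of_gt (hh' y))
  have hgderiv_pos : ∀ y, yInf < y → y ≤ y₀ → 0 < deriv g y := by
    intro y h1 h2
    rw [(hgd y).deriv]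
    have hfy := hfpos y
    have hAy := hApos y h1
    have hBy := hh' y
    have hcy := hhlam' y
    have hey := hh'' y
    have hP := hPle y h2
    have hBA : A y ≤ deriv h y := by simp only [hA]; linarith
    apply div_pos _ (by positivity)
    nlinarith [mul_pos (mul_pos hfy hAy) hBy, mul_pos hfy hcy,
      mul_nonneg (mul_nonneg hfy.le hey) (sub_nonneg.mpr hBA),
      mul_pos (mul_pos (hlampos y) (mul_pos hfy hAy)) hBy]
  have hgcont : Continuous g := by
    have : Differentiable ℝ g := fun y => (hgd y).differentiableAt
    exact this.continuous
  have hgmono : StrictMonoOn g (Set.Ioc yInf y₀) := by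
    apply strictMonoOn_of_deriv_pos (convex_Ioc _ _) hgcont.continuousOn
    intro x hx
    rw [interior_Ioc] at hx
    exact hgderiv_pos x hx.1 hx.2.le
  have hgpos : ∀ y, yInf < y → 0 < g y := by
    intro y hy
    exact div_pos (mul_pos (hfpos y) (hApos y hy)) (hh' y)
  -- rewrite τ in terms of g
  have hfy₀ : f y₀ ≠ 0 := (hfpos y₀).ne'
  have hτg : ∀ y, τ y = -(1 / δ) * Real.log (g y / f y₀) := by
    intro y
    rw [hτ y]
    congr 1
    congr 1
    field_simp [hg, hA]
    ring
  refine ⟨hgmono, ?_, ?_, ?_⟩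
  · -- strict anti
    intro a ha b hb hab
    rw [hτg a, hτg b]
    have h1 : g a < g b := hgmono ha hb hab
    have h2 : 0 < g a / f y₀ := div_pos (hgpos a ha.1) (hfpos y₀)
    have h3 : g a / f y₀ < g b / f y₀ := by gcongr; exact hfpos y₀
    have h4 := Real.log_lt_log h2 h3
    exact mul_lt_mul_of_neg_left h4 (neg_lt_zero.mpr (by positivity))
  · -- τ y₀ = 0
    rw [hτ y₀]
    have hAy₀ : h y₀ * lam y₀ + deriv h y₀ + δ = deriv h y₀ := by linarith
    rw [hAy₀, div_self hfy₀, one_mul, div_self (hh' y₀).ne', Real.log_one, mul_zero]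
  · -- tendsto atTop
    have hgy : g yInf = 0 := by simp [hg, hAinf]
    have h0 : Tendsto (fun y => g y / f y₀) (nhdsWithin yInf (Set.Ioi yInf))
        (nhdsWithin 0 (Set.Ioi 0)) := by
      rw [tendsto_nhdsWithin_iff]
      constructor
      · have hgt : Tendsto g (nhdsWithin yInf (Set.Ioi yInf)) (nhds 0) := by
          rw [← hgy]
          exact (hgcont.tendsto yInf).mono_left nhdsWithin_le_nhds
        simpa using hgt.div_const (f y₀)
      · filter_upwards [self_mem_nhdsWithin] with y hy
        exact div_pos (hgpos y hy) (hfpos y₀)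
    have hlog : Tendsto (fun y => Real.log (g y / f y₀))
        (nhdsWithin yInf (Set.Ioi yInf)) atBot :=
      Real.tendsto_log_nhdsGT_zero.comp h0
    have : Tendsto (fun y => -(1 / δ) * Real.log (g y / f y₀))
        (nhdsWithin yInf (Set.Ioi yInf)) atTop := by
      have h1 : Tendsto (fun y => -Real.log (g y / f y₀))
          (nhdsWithin yInf (Set.Ioi yInf)) atTop := tendsto_neg_atBot_atTop.comp hlog
      have h2 := h1.const_mul_atTop (by positivity : (0:ℝ) < 1 / δ)
      refine h2.congr fun y => by ring
    exact this.congr fun y => (hτg y).symm
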